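/- arXiv:1509.08947 — 3 statements merged into one kernel-verified Lean document; each statement's English description precedes it below -/
import Mathlib

section
/- With F and B as above, define C_n = {x ∈ B : π_m(x) = π_n(x) for all m > n}. Then B = ⋃_{n∈ℕ} C_n. -/
def pi (pair : ℕ × ℕ → ℕ) (n : ℕ) (x : ℕ → Bool) : ℕ → Bool :=
  fun m => x (pair (n, m))

def Bset (pair : ℕ × ℕ → ℕ) (F : ℕ → Set (ℕ → Bool)) : Set (ℕ → Bool) :=
  {x | ∀ n, pi pair n x ∈ F (n + 1) \ F n ∨
    (pi pair n x ∈ F n ∧ pi pair n x = pi pair (n + 1) x)}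

def Cset (pair : ℕ × ℕ → ℕ) (F : ℕ → Set (ℕ → Bool)) (n : ℕ) : Set (ℕ → Bool) :=
  {x ∈ Bset pair F | ∀ m > n, pi pair m x = pi pair n x}

theorem stmt4 (pair : ℕ × ℕ → ℕ) (hpair : Function.Bijective pair)
    (F : ℕ → Set (ℕ → Bool)) (hmono : Monotone F)
    (hunion : ⋃ n, F n = Set.univ)
    (hclosed : ∀ n m x, x ∈ F n → pi pair m x ∈ F n) :
    Bset pair F = ⋃ n, Cset pair F n := by
  ext x
  constructor
  · intro hB
    have hx : x ∈ ⋃ n, F n := by rw [hunion]; trivial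
    obtain ⟨N, hN⟩ := Set.mem_iUnion.mp hx
    have hpiN : pi pair N x ∈ F N := hclosed N N x hN
    -- key: for all m ≥ N, pi pair m x = pi pair N x and pi pair m x ∈ F m
    have key : ∀ m, N ≤ m → pi pair m x = pi pair N x ∧ pi pair m x ∈ F m := by
      intro m hm
      induction m, hm using Nat.le_induction with
      | base => exact ⟨rfl, hpiN⟩
      | succ m hm ih =>
        obtain ⟨heq, hmem⟩ := ih
        rcases hB m with h | ⟨_, heq'⟩
        · exact absurd hmem h.2
        · refine ⟨heq'.symm.trans heq, ?_⟩
          rw [← heq']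
          exact hmono (Nat.le_succ m) hmem
    exact Set.mem_iUnion.mpr ⟨N, hB, fun m hm => (key m hm.le).1⟩
  · intro hx
    obtain ⟨n, hn, _⟩ := Set.mem_iUnion.mp hx
    exact hn
end

section
/- With F increasing, closed under every π_m, and with union 2^ℕ, and B defined as above: if x ∈ B and x ∈ F_n, then π_m(x) = π_n(x) for all m ≥ n (i.e., x ∈ C_n). -/
theorem stmt11 (pair : ℕ × ℕ → ℕ) (hpair : Function.Bijective pair)
    (F : ℕ → Set (ℕ → Bool)) (hmono : Monotone F)
    (hunion : ⋃ n, F n = Set.univ)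
    (hclosed : ∀ n m x, x ∈ F n → pi pair m x ∈ F n)
    (x : ℕ → Bool) (n : ℕ) (hxB : x ∈ Bset pair F) (hxF : x ∈ F n) :
    ∀ m ≥ n, pi pair m x = pi pair n x := by
  intro m hm
  induction m with
  | zero => interval_cases n; rfl
  | succ k ih =>
    rcases Nat.lt_or_ge n (k+1) with h | h
    · have hk : n ≤ k := Nat.lt_succ_iff.mp h
      have hkn := ih hk
      have hpk : pi pair k x ∈ F k := hmono hk (hclosed n k x hxF)
      rcases hxB k with ⟨_, hnot⟩ | ⟨_, heq⟩
      · exact absurd hpk hnot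
      · rw [← heq, hkn]
    · have : n = k + 1 := le_antisymm hm h
      rw [this]
end

section
/- Let F : ℕ → Set(2^ℕ) be increasing with each F_{k+1} \ F_k nonempty, and define B as above. For y ∈ 2^ℕ with y ∈ F_{n+1} \ F_n, choose x_k ∈ F_{k+1} \ F_k for each k < n, and let x be the unique element of 2^ℕ with π_k(x) = x_k for k < n and π_k(x) = y for k ≥ n. Then x ∈ B. -/
theorem stmt12 (pair : ℕ × ℕ → ℕ) (hpair : Function.Bijective pair)
    (F : ℕ → Set (ℕ → Bool)) (hmono : Monotone F)
    (hne : ∀ k, (F (k + 1) \ F k).Nonempty)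
    (n : ℕ) (y : ℕ → Bool) (hy : y ∈ F (n + 1) \ F n)
    (xk : ℕ → (ℕ → Bool)) (hxk : ∀ k < n, xk k ∈ F (k + 1) \ F k)
    (x : ℕ → Bool)
    (hlt : ∀ k < n, pi pair k x = xk k)
    (hge : ∀ k ≥ n, pi pair k x = y) :
    x ∈ Bset pair F := by
  intro k
  rcases lt_trichotomy k n with h | h | h
  · left
    rw [hlt k h]
    exact hxk k h
  · left
    rw [hge k h.ge]
    exact h ▸ hy
  · right
    rw [hge k h.le, hge (k + 1) (by omega)]
    exact ⟨hmono (by omega : n + 1 ≤ k) hy.1, rfl⟩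
end
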